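/- The steady-state equation 0 = [A_I D + A_II (1-D)] z̄ + b_I D + b_II (1-D) for the averaged model of the semi-quasi-Z-source inverter with constant duty cycle D ∈ (0,1) has the unique solution z̄ = (ī_{L1}, ī_{L2}, v̄_{C1}, v̄_{C2}) with v̄_{C1} = V_in·D/(1-D), v̄_{C2} = V_in·(1-2D)/(1-D), ī_{L2} = -v̄_{C2}/R, and ī_{L1} = ī_{L2}·D/(1-D). -/

import Mathlib

open Matrix

set_option maxHeartbeats 1600000 in
/-- unique steady state of the averaged model. -/
theorem steady_state_unique
    (L1 L2 C1 C2 R Vin : ℝ) (hL1 : 0 < L1) (hL2 : 0 < L2) (hC1 : 0 < C1)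
    (hC2 : 0 < C2) (hR : 0 < R) (hVin : 0 < Vin)
    (D : ℝ) (hD : D ∈ Set.Ioo (0:ℝ) 1)
    (P : Matrix (Fin 4) (Fin 4) ℝ) (hP : P = (1/2 : ℝ) • Matrix.diagonal ![L1, L2, C1, C2])
    (AIq AIIq : Matrix (Fin 4) (Fin 4) ℝ)
    (hAIq : AIq = !![0,0,0,0; 0,0,1,1; 0,-1,0,0; 0,-1,0,-1/R])
    (hAIIq : AIIq = !![0,0,-1,0; 0,0,0,1; 1,0,0,0; 0,-1,0,-1/R])
    (bIq bIIq : Fin 4 → ℝ)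
    (hbIq : bIq = ![Vin, 0, 0, 0]) (hbIIq : bIIq = ![0, -Vin, 0, 0])
    (AI AII : Matrix (Fin 4) (Fin 4) ℝ) (bI bII : Fin 4 → ℝ)
    (hAI : AI = (1/2 : ℝ) • (P⁻¹ * AIq)) (hAII : AII = (1/2 : ℝ) • (P⁻¹ * AIIq))
    (hbI : bI = (1/2 : ℝ) • (P⁻¹ *ᵥ bIq)) (hbII : bII = (1/2 : ℝ) • (P⁻¹ *ᵥ bIIq)) :
    ∀ z : Fin 4 → ℝ,
      ((D • AI + (1 - D) • AII) *ᵥ z + D • bI + (1 - D) • bII = 0) ↔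
      z = ![ (-(Vin * (1 - 2*D) / (1 - D)) / R) * (D / (1 - D)),
             -(Vin * (1 - 2*D) / (1 - D)) / R,
             Vin * D / (1 - D),
             Vin * (1 - 2*D) / (1 - D) ] := by
  have hPinv : P⁻¹ = Matrix.diagonal ![2/L1, 2/L2, 2/C1, 2/C2] := by
    apply inv_eq_right_inv
    rw [hP, Matrix.smul_mul, Matrix.diagonal_mul_diagonal]
    ext i j
    fin_cases i <;> fin_cases j <;>
      simp [Matrix.diagonal, Matrix.one_apply] <;> field_simp
  obtain ⟨hD0, hD1⟩ := hD
  have hD1' : (1:ℝ) - D ≠ 0 := by linarith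
  subst hAI hAII hbI hbII hAIq hAIIq hbIq hbIIq
  rw [hPinv]
  intro z
  constructor
  · intro h
    have h0 := congrFun h 0
    have h1 := congrFun h 1
    have h2 := congrFun h 2
    have h3 := congrFun h 3
    clear h
    simp [Matrix.mulVec, dotProduct, Fin.sum_univ_four, Matrix.diagonal_mul,
      Matrix.mulVec_diagonal, Matrix.diagonal_apply] at h0 h1 h2 h3
    field_simp at h0 h1 h2 h3
    -- clean equations, removing L1, C1, C2 factors
    have f2 : z 2 * (1 - D) = Vin * D := by
      have h0' : (z 2 * (1 - D) - Vin * D) * L1 = 0 := by linear_combination -L1 * h0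
      have := (mul_eq_zero.mp h0').resolve_right hL1.ne'
      linarith
    have f3 : z 3 * (1 - D) = Vin * (1 - 2*D) := by
      linear_combination (1 - D) * h1 - D * f2
    have f1 : z 1 * (R * (1 - D)) = -(Vin * (1 - 2*D)) := by
      have h3' : (z 1 * R + z 3) * (C2 * C2 * C2 * R) = 0 := by linear_combination -(C2 * C2 * C2 * R) * h3
      have hc : (C2 * C2 * C2 * R) ≠ 0 := by positivity
      have := (mul_eq_zero.mp h3').resolve_right hc
      linear_combination (1 - D) * this - f3
    have f0 : z 0 * (R * (1 - D) * (1 - D)) = -(Vin * (1 - 2*D)) * D := by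
      linear_combination R * (1 - D) * h2 + D * f1
    funext i
    fin_cases i <;> simp <;> field_simp <;>
      [linear_combination f0; linear_combination f1; linear_combination f2; linear_combination f3]
  · intro h
    subst h
    funext i
    fin_cases i <;>
      · simp [Matrix.mulVec, dotProduct, Fin.sum_univ_four, Matrix.diagonal_mul,
          Matrix.mulVec_diagonal, Matrix.diagonal_apply]
        field_simp
        ring
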